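/- (McCoy-type result for several variables) Let γ be a nonzero ideal of A[x₁,...,x_n] over a commutative ring A and let f ∈ A[x₁,...,x_n] be nonzero with fγ = 0. Then there exists a ∈ A such that af ≠ 0 and c(af)·γ = 0, where c(af) is the ideal of A generated by the coefficients of af. -/

import Mathlib

open MvPolynomial

lemma mccoy_key {A : Type*} [CommRing A] {n : ℕ}
    (f g : MvPolynomial (Fin n) A) (hfg : f * g = 0) (hf : f ≠ 0)
    (h : ∃ e, C (g.coeff e) * f ≠ 0) :
    ∃ b : A, C b * f ≠ 0 ∧ (C b * f).support ⊂ f.support := by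
  classical
  set T : Finset (Fin n →₀ ℕ) := g.support.filter (fun e' => C (g.coeff e') * f ≠ 0) with hT
  have hTne : T.Nonempty := by
    obtain ⟨e, he⟩ := h
    refine ⟨e, Finset.mem_filter.2 ⟨?_, he⟩⟩
    simp only [mem_support_iff]
    intro h0
    rw [h0, map_zero, zero_mul] at he
    exact he rfl
  obtain ⟨e, heT, hemax⟩ := T.exists_max_image (fun e => toLex e) hTne
  have hbf : C (g.coeff e) * f ≠ 0 := (Finset.mem_filter.1 heT).2
  -- max element of supp f
  obtain ⟨d, hdf, hdmax⟩ := f.support.exists_max_image (fun d => toLex d) (support_nonempty.2 hf)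
  -- coefficient of f*g at d+e
  have hco : (f * g).coeff (d + e) = 0 := by rw [hfg, coeff_zero]
  rw [coeff_mul] at hco
  have hterm : ∀ p ∈ Finset.HasAntidiagonal.antidiagonal (d + e), p ≠ (d, e) →
      f.coeff p.1 * g.coeff p.2 = 0 := by
    rintro ⟨d', e'⟩ hp hne
    rw [Finset.HasAntidiagonal.mem_antidiagonal] at hp
    by_cases hd' : f.coeff d' = 0
    · rw [hd', zero_mul]
    by_cases he' : C (g.coeff e') * f = 0
    · have h2 := congrArg (MvPolynomial.coeff d') he'
      rw [coeff_C_mul, coeff_zero] at h2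
      rw [mul_comm]; exact h2
    have he'T : e' ∈ T := by
      refine Finset.mem_filter.2 ⟨?_, he'⟩
      simp only [mem_support_iff]
      intro h0; rw [h0, map_zero, zero_mul] at he'; exact he' rfl
    have hle : toLex e' ≤ toLex e := hemax e' he'T
    have hlt : toLex e' < toLex e := by
      rcases lt_or_eq_of_le hle with h | h
      · exact h
      · exfalso
        have : e' = e := toLex.injective h
        subst this
        have : d' = d := by
          have := hp
          exact add_right_cancel this
        exact hne (by rw [this])
    have hdd : toLex d < toLex d' := by
      by_contra hc
      push_neg at hc
      have : toLex d' + toLex e' < toLex d + toLex e := add_lt_add_of_le_of_lt hc hlt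
      have h2 : toLex (d' + e') = toLex (d + e) := congrArg toLex hp
      rw [show toLex (d' + e') = toLex d' + toLex e' from rfl,
        show toLex (d + e) = toLex d + toLex e from rfl] at h2
      exact absurd h2 (ne_of_lt this)
    have : toLex d' ≤ toLex d := hdmax d' (mem_support_iff.2 hd')
    exact absurd hdd (not_lt.2 this)
  have hsum : f.coeff d * g.coeff e = 0 := by
    have hmem : (d, e) ∈ Finset.HasAntidiagonal.antidiagonal (d + e) := Finset.HasAntidiagonal.mem_antidiagonal.2 rfl
    rw [Finset.sum_eq_single_of_mem (d, e) hmem (fun p hp hne => hterm p hp hne)] at hco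
    exact hco
  refine ⟨g.coeff e, hbf, ?_⟩
  constructor
  · intro d' hd'
    rw [mem_support_iff, coeff_C_mul] at hd'
    exact mem_support_iff.2 fun h0 => hd' (by rw [h0, mul_zero])
  · intro hsub
    have : d ∈ (C (g.coeff e) * f).support := hsub hdf
    rw [mem_support_iff, coeff_C_mul] at this
    exact this (by rw [mul_comm]; exact hsum)


lemma mccoy_aux {A : Type*} [CommRing A] {n : ℕ}
    (γ : Ideal (MvPolynomial (Fin n) A)) :
    ∀ N : ℕ, ∀ f : MvPolynomial (Fin n) A, f.support.card ≤ N → f ≠ 0 →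
    (∀ g ∈ γ, f * g = 0) →
    ∃ a : A, (C a) * f ≠ 0 ∧
      ∀ d : Fin n →₀ ℕ, ∀ g ∈ γ, (C (((C a) * f).coeff d)) * g = 0 := by
  intro N
  induction N with
  | zero =>
    intro f hcard hf _
    exact absurd (support_eq_empty.1 (Finset.card_eq_zero.1 (Nat.le_zero.1 hcard))) hf
  | succ N ih =>
    intro f hcard hf hfγ
    by_cases hall : ∀ g ∈ γ, ∀ e, C (g.coeff e) * f = 0
    · refine ⟨1, by simpa using hf, ?_⟩
      intro d g hg
      rw [map_one, one_mul]
      ext e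
      rw [coeff_C_mul, coeff_zero]
      have := congrArg (MvPolynomial.coeff d) (hall g hg e)
      rw [coeff_C_mul, coeff_zero] at this
      rw [mul_comm] at this
      exact this
    · push_neg at hall
      obtain ⟨g, hg, e, he⟩ := hall
      obtain ⟨b, hbf, hbsub⟩ := mccoy_key f g (hfγ g hg) hf ⟨e, he⟩
      have hcard2 : (C b * f).support.card ≤ N := by
        have := Finset.card_lt_card hbsub
        omega
      obtain ⟨a, haf, ha⟩ := ih (C b * f) hcard2 hbf
        (fun g' hg' => by rw [mul_assoc, hfγ g' hg', mul_zero])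
      refine ⟨a * b, ?_, ?_⟩
      · rwa [map_mul, mul_assoc]
      · intro d g' hg'
        have := ha d g' hg'
        rwa [map_mul, mul_assoc]

/-- McCoy-type result for several variables: if f·γ = 0 with f ≠ 0 and γ ≠ 0, then
there is a ∈ A with af ≠ 0 and c(af)·γ = 0. -/
theorem mccoy_mvPolynomial {A : Type*} [CommRing A] (n : ℕ)
    (γ : Ideal (MvPolynomial (Fin n) A)) (hγ : γ ≠ ⊥)
    (f : MvPolynomial (Fin n) A) (hf : f ≠ 0)
    (hfγ : ∀ g ∈ γ, f * g = 0) :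
    ∃ a : A, (C a) * f ≠ 0 ∧
      ∀ d : Fin n →₀ ℕ, ∀ g ∈ γ, (C (((C a) * f).coeff d)) * g = 0 :=
  mccoy_aux γ f.support.card f le_rfl hf hfγ
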